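/- Fix q ∈ ((31 − 12√3)/23, (12√3 − 8)/23) and let δ* = min{4/q², 4/(1−q)²}. Let g_δ(x) = x·(1 − δ·(1−x)·(x−q)). Then there exists δ_q ∈ (0, δ*) such that for every δ ∈ (δ_q, δ*): (i) for every n ≥ 1 the map g_δ has a periodic point of (least) period n, i.e. a point x ∈ [0,1] with g_δⁿ(x) = x and g_δᵏ(x) ≠ x for all 1 ≤ k < n; and (ii) g_δ is Li–Yorke chaotic. -/

import Mathlib

open Filter

/-- A continuous self-map `f` of `[0,1]` is *Li–Yorke chaotic* if there is an
uncountable scrambled set `S ⊆ [0,1]`: for all distinct `x, y ∈ S`,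
`liminf_n |fⁿ(x) − fⁿ(y)| = 0` and `limsup_n |fⁿ(x) − fⁿ(y)| > 0`. -/
def LiYorkeChaotic (f : ℝ → ℝ) : Prop :=
  ∃ S : Set ℝ, S ⊆ Set.Icc (0:ℝ) 1 ∧ ¬ S.Countable ∧
    ∀ x ∈ S, ∀ y ∈ S, x ≠ y →
      Filter.liminf (fun n : ℕ => |f^[n] x - f^[n] y|) atTop = 0 ∧
      0 < Filter.limsup (fun n : ℕ => |f^[n] x - f^[n] y|) atTop


open Set Filter

lemma onto_sub_aux {f : ℝ → ℝ} (hf : Continuous f) {x₀ x₁ c d : ℝ}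
    (h01 : x₀ ≤ x₁) (hcd : c ≤ d) (h0 : f x₀ = c) (h1 : f x₁ = d) :
    ∃ u v, u ≤ v ∧ Icc u v ⊆ Icc x₀ x₁ ∧ f '' Icc u v = Icc c d := by
  set A : Set ℝ := Icc x₀ x₁ ∩ f ⁻¹' {c} with hA
  have hAne : A.Nonempty := ⟨x₀, ⟨le_refl _, h01⟩, h0⟩
  have hAcp : IsCompact A := isCompact_Icc.inter_right (isClosed_singleton.preimage hf)
  set u := sSup A with hu
  have huA : u ∈ A := hAcp.sSup_mem hAne
  have hufc : f u = c := huA.2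
  have hux₁ : u ≤ x₁ := huA.1.2
  have hx₀u : x₀ ≤ u := huA.1.1
  have hAbdd : BddAbove A := hAcp.bddAbove
  set B : Set ℝ := Icc u x₁ ∩ f ⁻¹' {d} with hB
  have hBne : B.Nonempty := ⟨x₁, ⟨hux₁, le_refl _⟩, h1⟩
  have hBcp : IsCompact B := isCompact_Icc.inter_right (isClosed_singleton.preimage hf)
  set v := sInf B with hv
  have hvB : v ∈ B := hBcp.sInf_mem hBne
  have hvfd : f v = d := hvB.2
  have huv : u ≤ v := hvB.1.1
  have hvx₁ : v ≤ x₁ := hvB.1.2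
  have hBbdd : BddBelow B := hBcp.bddBelow
  refine ⟨u, v, huv, fun x hx => ⟨le_trans hx₀u hx.1, le_trans hx.2 hvx₁⟩, ?_⟩
  apply Subset.antisymm
  · rintro y ⟨x, hx, rfl⟩
    constructor
    · by_contra hlt
      push_neg at hlt
      have : c ∈ Icc (f x) (f v) := ⟨hlt.le, hvfd ▸ hcd⟩
      obtain ⟨y, hy, hyc⟩ := intermediate_value_Icc hx.2 hf.continuousOn this
      have hyA : y ∈ A := ⟨⟨le_trans hx₀u (le_trans hx.1 hy.1), le_trans hy.2 hvx₁⟩, hyc⟩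
      have hyu : y ≤ u := le_csSup hAbdd hyA
      have hxu : x = u := le_antisymm (hy.1.trans hyu) hx.1
      rw [hxu, hufc] at hlt
      exact lt_irrefl c hlt
    · by_contra hlt
      push_neg at hlt
      have : d ∈ Icc (f u) (f x) := ⟨hufc ▸ hcd, hlt.le⟩
      obtain ⟨y, hy, hyd⟩ := intermediate_value_Icc hx.1 hf.continuousOn this
      have hyB : y ∈ B := ⟨⟨hy.1, le_trans hy.2 (hx.2.trans hvx₁)⟩, hyd⟩
      have hvy : v ≤ y := csInf_le hBbdd hyB
      have hxv : x = v := le_antisymm hx.2 (hvy.trans hy.2)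
      rw [hxv, hvfd] at hlt
      exact lt_irrefl d hlt
  · have h := intermediate_value_Icc huv hf.continuousOn
    rw [hufc, hvfd] at h
    exact h

/-- Main onto-subinterval lemma. -/
lemma onto_sub {f : ℝ → ℝ} (hf : Continuous f) {A B c d : ℝ}
    (hcd : c ≤ d) (h : Icc c d ⊆ f '' Icc A B) :
    ∃ u v, u ≤ v ∧ Icc u v ⊆ Icc A B ∧ f '' Icc u v = Icc c d := by
  obtain ⟨x₀, hx₀, hfx₀⟩ := h (left_mem_Icc.2 hcd)
  obtain ⟨x₁, hx₁, hfx₁⟩ := h (right_mem_Icc.2 hcd)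
  rcases le_total x₀ x₁ with hle | hle
  · obtain ⟨u, v, huv, hsub, him⟩ := onto_sub_aux hf hle hcd hfx₀ hfx₁
    exact ⟨u, v, huv, fun x hx => ⟨hx₀.1.trans (hsub hx).1, (hsub hx).2.trans hx₁.2⟩, him⟩
  · -- reflect
    set σ : ℝ → ℝ := fun t => x₁ + x₀ - t with hσ
    have hσc : Continuous (f ∘ σ) := hf.comp (by continuity)
    have h0 : (f ∘ σ) x₁ = c := by
      simp only [Function.comp_apply, hσ]
      rw [show x₁ + x₀ - x₁ = x₀ by ring, hfx₀]
    have h1 : (f ∘ σ) x₀ = d := by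
      simp only [Function.comp_apply, hσ]
      rw [show x₁ + x₀ - x₀ = x₁ by ring, hfx₁]
    obtain ⟨u, v, huv, hsub, him⟩ := onto_sub_aux hσc hle hcd h0 h1
    refine ⟨x₁ + x₀ - v, x₁ + x₀ - u, by linarith, ?_, ?_⟩
    · intro x hx
      have h1' : x₁ + x₀ - x ∈ Icc u v := ⟨by simp at hx ⊢; linarith [hx.2], by simp at hx ⊢; linarith [hx.1]⟩
      have := hsub h1'
      simp at this hx
      constructor
      · linarith [hx₁.1, this.2]
      · linarith [hx₀.2, this.1]
    · rw [← him]
      have : Icc (x₁ + x₀ - v) (x₁ + x₀ - u) = σ '' Icc u v := by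
        rw [hσ, Set.image_const_sub_Icc]
      rw [this, ← Set.image_comp]


/-- A continuous map whose image of `[u,v]` covers `[u,v]` has a fixed point there. -/
lemma fixed_of_onto {F : ℝ → ℝ} (hF : Continuous F) {u v a b : ℝ} (huv : u ≤ v)
    (him : F '' Icc u v = Icc a b) (hau : a ≤ u) (hvb : v ≤ b) :
    ∃ x ∈ Icc u v, F x = x := by
  have hab : a ≤ b := le_trans hau (le_trans huv hvb)
  obtain ⟨s, hs, hFs⟩ : ∃ s ∈ Icc u v, F s = a := by
    have : a ∈ Icc a b := left_mem_Icc.2 hab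
    rw [← him] at this; exact this.imp fun s hs => ⟨hs.1, hs.2⟩
  obtain ⟨t, ht, hFt⟩ : ∃ t ∈ Icc u v, F t = b := by
    have : b ∈ Icc a b := right_mem_Icc.2 hab
    rw [← him] at this; exact this.imp fun s hs => ⟨hs.1, hs.2⟩
  set G : ℝ → ℝ := fun x => F x - x with hG
  have hGc : Continuous G := hF.sub continuous_id
  have hGs : G s ≤ 0 := by simp [hG, hFs]; linarith [hs.1]
  have hGt : 0 ≤ G t := by simp [hG, hFt]; linarith [ht.2]
  have h0 : (0:ℝ) ∈ uIcc (G s) (G t) := by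
    rw [Set.mem_uIcc]; left; exact ⟨hGs, hGt⟩
  obtain ⟨x, hx, hGx⟩ := intermediate_value_uIcc (hGc.continuousOn) h0
  refine ⟨x, ?_, by simpa [hG, sub_eq_zero] using hGx⟩
  rcases le_total s t with h' | h'
  · rw [Set.uIcc_of_le h'] at hx; exact ⟨hs.1.trans hx.1, hx.2.trans ht.2⟩
  · rw [Set.uIcc_of_ge h'] at hx; exact ⟨ht.1.trans hx.1, hx.2.trans hs.2⟩

/-- Data of a one-dimensional "horseshoe" for `f` :
an interval `[a,b]` containing a fixed point `p` with uniform expansion away from `p`,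
and a second interval `[c,d]`, uniformly separated from `[a,b]`, such that
`f([a,b]) ⊇ [a,b] ∪ [c,d]` and `f([c,d]) ⊇ [a,b]`. -/
structure Horseshoe (f : ℝ → ℝ) where
  a : ℝ
  b : ℝ
  c : ℝ
  d : ℝ
  p : ℝ
  lam : ℝ
  gap : ℝ
  hf : Continuous f
  hab : a ≤ b
  hcd : c ≤ d
  hI : Icc a b ⊆ Icc (0:ℝ) 1
  hJ : Icc c d ⊆ Icc (0:ℝ) 1
  hp : p ∈ Icc a b
  hgap : 0 < gap
  hsep : ∀ x ∈ Icc a b, ∀ y ∈ Icc c d, gap ≤ |x - y|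
  hfp : f p = p
  hlam : 1 < lam
  hexp : ∀ x ∈ Icc a b, lam * |x - p| ≤ |f x - p|
  hcov00 : Icc a b ⊆ f '' Icc a b
  hcov01 : Icc c d ⊆ f '' Icc a b
  hcov10 : Icc a b ⊆ f '' Icc c d


section Tri


/-- partial sums 0, 1, 3, 6, ... of blocks of lengths 1,2,3,... -/
def Tri : ℕ → ℕ
  | 0 => 0
  | k+1 => Tri k + k + 1

lemma Tri_succ (k : ℕ) : Tri (k+1) = Tri k + k + 1 := rfl

lemma Tri_ge (k : ℕ) : k ≤ Tri k := by
  induction k with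
  | zero => simp [Tri]
  | succ k ih => rw [Tri_succ]; omega

lemma Tri_mono : Monotone Tri :=
  monotone_nat_of_le_succ (fun k => by rw [Tri_succ]; omega)

lemma Tri_ex (n : ℕ) : ∃ k, n < Tri (k+1) :=
  ⟨n, lt_of_lt_of_le (Nat.lt_succ_self n) (Tri_ge (n+1))⟩

/-- block index of time `n` -/
def blk (n : ℕ) : ℕ := Nat.find (Tri_ex n)

lemma blk_spec (n : ℕ) : n < Tri (blk n + 1) := Nat.find_spec (Tri_ex n)

lemma blk_le (n : ℕ) : Tri (blk n) ≤ n := by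
  cases hB : blk n with
  | zero => simp [Tri]
  | succ m =>
    have hmlt : m < blk n := by rw [hB]; exact Nat.lt_succ_self m
    have h2 := Nat.find_min (Tri_ex n) hmlt
    push_neg at h2
    exact h2

lemma blk_eq {k n : ℕ} (h1 : Tri k ≤ n) (h2 : n < Tri (k+1)) : blk n = k := by
  have hle : blk n ≤ k := Nat.find_min' (Tri_ex n) h2
  rcases lt_or_eq_of_le hle with hlt | heq
  · have : Tri (blk n + 1) ≤ Tri k := Tri_mono (by omega)
    have := blk_spec n
    omega
  · exact heq

/-- The itinerary associated to `β : ℕ → Bool` : block `k` consists of `k` "false"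
symbols followed by the symbol `β ((Nat.unpair k).1)`. -/
def itin (β : ℕ → Bool) (n : ℕ) : Bool :=
  if n - Tri (blk n) = blk n then β (Nat.unpair (blk n)).1 else false

lemma itin_run (β : ℕ → Bool) {k j : ℕ} (hj : j < k) : itin β (Tri k + j) = false := by
  have hb : blk (Tri k + j) = k :=
    blk_eq (by omega) (by rw [Tri_succ]; omega)
  unfold itin
  rw [hb, if_neg (by omega)]

lemma itin_bit (β : ℕ → Bool) (k : ℕ) : itin β (Tri k + k) = β (Nat.unpair k).1 := by
  have hb : blk (Tri k + k) = k :=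
    blk_eq (by omega) (by rw [Tri_succ]; omega)
  unfold itin
  rw [hb, if_pos (by omega)]

lemma itin_adm (β : ℕ → Bool) : ∀ n, itin β n = true → itin β (n+1) = false := by
  intro n h
  have hr : n - Tri (blk n) = blk n := by
    by_contra hne
    unfold itin at h
    rw [if_neg hne] at h
    exact Bool.false_ne_true h
  have hn : n = Tri (blk n) + blk n := by
    have := blk_le n
    omega
  have : n + 1 = Tri (blk n + 1) + 0 := by rw [Tri_succ]; omega
  rw [this]
  exact itin_run β (by omega)

end Tri

namespace Horseshoe


variable {f : ℝ → ℝ} (H : Horseshoe f)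

/-- symbol intervals -/
def I (H : Horseshoe f) : Bool → Set ℝ
  | false => Icc H.a H.b
  | true => Icc H.c H.d

lemma I_false (H : Horseshoe f) : H.I false = Icc H.a H.b := rfl
lemma I_true (H : Horseshoe f) : H.I true = Icc H.c H.d := rfl

lemma I_sub_unit : ∀ s, H.I s ⊆ Icc (0:ℝ) 1 := by
  intro s; cases s
  · exact H.hI
  · exact H.hJ

lemma I_disj {x : ℝ} (hx : x ∈ H.I false) (hx' : x ∈ H.I true) : False := by
  have := H.hsep x hx x hx'
  simp at this
  linarith [H.hgap]

lemma I_cov : ∀ s t : Bool, (s = true → t = false) → H.I t ⊆ f '' H.I s := by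
  intro s t hst
  cases s
  · cases t
    · exact H.hcov00
    · exact H.hcov01
  · rw [hst rfl]; exact H.hcov10

/-- iterate mod a period -/
lemma iterate_mod {x : ℝ} {k : ℕ} (hk : 0 < k) (hx : f^[k] x = x) (m : ℕ) :
    f^[m] x = f^[m % k] x := by
  have hmul : ∀ j : ℕ, f^[k * j] x = x := by
    intro j
    induction j with
    | zero => simp
    | succ j ih =>
      rw [Nat.mul_succ, Function.iterate_add_apply, hx, ih]
  conv_lhs => rw [← Nat.mod_add_div m k, Function.iterate_add_apply, hmul, ]

/-- periodic point of least period `N ≥ 2`. -/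
lemma periodic_point (H : Horseshoe f) (N : ℕ) (hN : 2 ≤ N) :
    ∃ x ∈ Icc (0:ℝ) 1, f^[N] x = x ∧ ∀ k, 1 ≤ k → k < N → f^[k] x ≠ x := by
  classical
  set w : ℕ → Bool := fun j => decide (j % N = N - 1) with hw
  have hw_lt : ∀ j, j < N → (w j = true ↔ j = N - 1) := by
    intro j hj; simp [hw, Nat.mod_eq_of_lt hj]
  have hwN : w N = false := by simp [hw, Nat.mod_self]; omega
  have hw0 : w 0 = false := Bool.eq_false_iff.2 (fun h => Nat.sub_ne_zero_of_lt (by omega : 1 < N) ((hw_lt 0 (by omega)).1 h).symm)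
  have key : ∀ m, m ≤ N → ∃ u v, u ≤ v ∧
      (∀ j ≤ m, f^[j] '' Icc u v ⊆ H.I (w (N - m + j))) ∧
      f^[m] '' Icc u v = Icc H.a H.b := by
    intro m
    induction m with
    | zero =>
      intro _
      refine ⟨H.a, H.b, H.hab, ?_, by simp⟩
      intro j hj
      interval_cases j
      have : N - 0 + 0 = N := by omega
      rw [this, hwN]
      simp [Horseshoe.I]
    | succ m ih =>
      intro hm1
      obtain ⟨u, v, huv, hitin, him⟩ := ih (le_of_lt (Nat.lt_of_succ_le hm1))
      set s := w (N - (m + 1)) with hs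
      have hKsub : Icc u v ⊆ H.I (w (N - m)) := by
        have h0 := hitin 0 (Nat.zero_le _)
        simpa using h0
      have hpull : Icc u v ⊆ f '' H.I s := by
        rcases Bool.eq_false_or_eq_true s with hst | hsf
        · -- s = true forces N - (m+1) = N - 1, hence m = 0 and K = [a,b]
          have hlt : N - (m + 1) < N := by omega
          have heq : N - (m + 1) = N - 1 := (hw_lt _ hlt).1 (hs ▸ hst)
          have hm0 : m = 0 := by omega
          subst hm0
          have hK : Icc u v = Icc H.a H.b := by simpa using him
          rw [hst, hK]
          exact H.hcov10
        · rw [hsf]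
          exact hKsub.trans (H.I_cov false (w (N - m)) (by simp))
      obtain ⟨u', v', hu'v', hsub', him'⟩ :
          ∃ u' v', u' ≤ v' ∧ Icc u' v' ⊆ H.I s ∧ f '' Icc u' v' = Icc u v := by
        rcases Bool.eq_false_or_eq_true s with hst | hsf
        · rw [hst] at hpull ⊢
          exact onto_sub H.hf huv hpull
        · rw [hsf] at hpull ⊢
          exact onto_sub H.hf huv hpull
      refine ⟨u', v', hu'v', ?_, ?_⟩
      · intro j hj
        cases j with
        | zero => simpa [hs] using hsub'
        | succ i =>
          have hiN : i ≤ m := by omega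
          have hcomp : f^[i + 1] '' Icc u' v' = f^[i] '' (f '' Icc u' v') := by
            rw [Function.iterate_succ]; exact Set.image_comp _ _ _
          rw [hcomp, him']
          have idx : N - (m + 1) + (i + 1) = N - m + i := by omega
          rw [idx]
          exact hitin i hiN
      · have hcomp : f^[m + 1] '' Icc u' v' = f^[m] '' (f '' Icc u' v') := by
          rw [Function.iterate_succ]; exact Set.image_comp _ _ _
        rw [hcomp, him', him]
  obtain ⟨u, v, huv, hitin, him⟩ := key N (le_refl N)
  have hitin' : ∀ j, j ≤ N → f^[j] '' Icc u v ⊆ H.I (w j) := by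
    intro j hj
    have := hitin j hj
    rwa [show N - N + j = j by omega] at this
  have hK0 : Icc u v ⊆ Icc H.a H.b := by
    have h0 := hitin' 0 (by omega)
    rw [hw0] at h0
    simpa [Horseshoe.I] using h0
  have hne : u ∈ Icc H.a H.b := hK0 (left_mem_Icc.2 huv)
  have hvb : v ∈ Icc H.a H.b := hK0 (right_mem_Icc.2 huv)
  obtain ⟨x, hxK, hxfix⟩ := fixed_of_onto (H.hf.iterate N) huv him hne.1 hvb.2
  have hitin_x : ∀ j, j ≤ N → f^[j] x ∈ H.I (w j) :=
    fun j hj => hitin' j hj ⟨x, hxK, rfl⟩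
  refine ⟨x, H.hI (hK0 hxK), hxfix, ?_⟩
  intro k hk1 hkN hfk
  have h1 : f^[N - 1] x ∈ H.I true := by
    have := hitin_x (N - 1) (by omega)
    rwa [(hw_lt (N-1) (by omega)).2 rfl] at this
  have h2 : f^[N - 1] x ∈ H.I false := by
    rw [Horseshoe.iterate_mod (by omega : 0 < k) hfk (N - 1)]
    have hr : (N - 1) % k < k := Nat.mod_lt _ (by omega)
    have hrN : (N - 1) % k < N := by omega
    have hrne : (N - 1) % k ≠ N - 1 := by omega
    have hm := hitin_x ((N - 1) % k) (by omega)
    rwa [show w ((N - 1) % k) = false by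
      rcases Bool.eq_false_or_eq_true (w ((N - 1) % k)) with h | h
      · exact absurd ((hw_lt _ hrN).1 h) hrne
      · exact h] at hm
  exact H.I_disj h2 h1


/-- Every admissible itinerary is followed by some point (finite version). -/
lemma follow_fin (H : Horseshoe f) :
    ∀ (N : ℕ) (T : ℕ → Bool), (∀ n, T n = true → T (n+1) = false) →
      ∃ x, ∀ j ≤ N, f^[j] x ∈ H.I (T j) := by
  intro N
  induction N with
  | zero =>
    intro T _
    refine ⟨if T 0 then H.c else H.a, ?_⟩
    intro j hj
    interval_cases j
    cases hT0 : T 0 <;> simp [hT0, Horseshoe.I, left_mem_Icc, H.hab, H.hcd]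
  | succ N ih =>
    intro T hT
    obtain ⟨y, hy⟩ := ih (fun n => T (n+1)) (fun n h => hT (n+1) h)
    have hy1 : y ∈ H.I (T 1) := by simpa using hy 0 (Nat.zero_le N)
    have hpull : H.I (T 1) ⊆ f '' H.I (T 0) := by
      cases hT0 : T 0 with
      | false => exact H.I_cov false (T 1) (by simp)
      | true =>
        rw [hT 0 hT0]
        exact H.hcov10
    obtain ⟨x, hx, hfx⟩ := hpull hy1
    refine ⟨x, ?_⟩
    intro j hj
    cases j with
    | zero => simpa using hx
    | succ i =>
      rw [Function.iterate_succ_apply, hfx]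
      exact hy i (by omega)

/-- Every admissible itinerary is followed by some point. -/
lemma follow (H : Horseshoe f) (T : ℕ → Bool) (hT : ∀ n, T n = true → T (n+1) = false) :
    ∃ x, ∀ j, f^[j] x ∈ H.I (T j) := by
  classical
  have hIclosed : ∀ s, IsClosed (H.I s) := by intro s; cases s <;> exact isClosed_Icc
  set A : ℕ → Set ℝ := fun N => ⋂ (j : Fin (N+1)), f^[(j:ℕ)] ⁻¹' (H.I (T j)) with hA
  have hclosed : ∀ N, IsClosed (A N) :=
    fun N => isClosed_iInter (fun j => (hIclosed _).preimage (H.hf.iterate _))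
  have hsub : ∀ N, A (N+1) ⊆ A N := by
    intro N x hx
    rw [hA, Set.mem_iInter] at hx ⊢
    intro j
    exact hx ⟨(j:ℕ), by omega⟩
  have hne : ∀ N, (A N).Nonempty := by
    intro N
    obtain ⟨x, hx⟩ := H.follow_fin N T hT
    exact ⟨x, Set.mem_iInter.2 fun j => hx j (by omega)⟩
  have hA0 : A 0 ⊆ H.I (T 0) := by
    intro x hx
    rw [hA, Set.mem_iInter] at hx
    simpa using hx ⟨0, by omega⟩
  have hcomp0 : IsCompact (A 0) := by
    have hIc : IsCompact (H.I (T 0)) := by cases (T 0) <;> exact isCompact_Icc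
    exact hIc.of_isClosed_subset (hclosed 0) hA0
  obtain ⟨x, hx⟩ :=
    IsCompact.nonempty_iInter_of_sequence_nonempty_isCompact_isClosed A hsub hne hcomp0 hclosed
  refine ⟨x, fun j => ?_⟩
  have hxj : x ∈ A j := Set.mem_iInter.1 hx j
  rw [hA] at hxj
  simpa using Set.mem_iInter.1 hxj ⟨j, by omega⟩

/-- expansion estimate: while the orbit stays in `[a,b]`, distances from `p` grow. -/
lemma exp_est (H : Horseshoe f) :
    ∀ (N : ℕ) (z : ℝ), (∀ j, j < N → f^[j] z ∈ Icc H.a H.b) →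
      H.lam ^ N * |z - H.p| ≤ |f^[N] z - H.p| := by
  intro N
  induction N with
  | zero => intro z _; simp
  | succ N ih =>
    intro z hz
    have h1 : H.lam ^ N * |z - H.p| ≤ |f^[N] z - H.p| := ih z (fun j hj => hz j (by omega))
    have h2 : H.lam * |f^[N] z - H.p| ≤ |f (f^[N] z) - H.p| :=
      H.hexp _ (hz N (Nat.lt_succ_self N))
    have hlam0 : (0:ℝ) ≤ H.lam := le_of_lt (lt_trans zero_lt_one H.hlam)
    rw [Function.iterate_succ_apply']
    calc H.lam ^ (N+1) * |z - H.p| = H.lam * (H.lam ^ N * |z - H.p|) := by ring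
    _ ≤ H.lam * |f^[N] z - H.p| := by
        exact mul_le_mul_of_nonneg_left h1 hlam0
    _ ≤ |f (f^[N] z) - H.p| := h2

lemma close_at (H : Horseshoe f) (β : ℕ → Bool) (x : ℝ)
    (hx : ∀ j, f^[j] x ∈ H.I (itin β j)) (k : ℕ) :
    |f^[Tri k] x - H.p| ≤ 1 / H.lam ^ k := by
  have hlam1 : (1:ℝ) < H.lam := H.hlam
  have hlam0 : (0:ℝ) < H.lam := lt_trans zero_lt_one hlam1
  have hpow : (0:ℝ) < H.lam ^ k := pow_pos hlam0 k
  set z := f^[Tri k] x with hz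
  have hmem : ∀ j, j < k → f^[j] z ∈ Icc H.a H.b := by
    intro j hj
    have hmem1 := hx (Tri k + j)
    rw [itin_run β hj, H.I_false] at hmem1
    rw [hz, ← Function.iterate_add_apply, show j + Tri k = Tri k + j from by omega]
    exact hmem1
  have hest := H.exp_est k z hmem
  have hk : f^[k] z ∈ Icc (0:ℝ) 1 := by
    rw [hz, ← Function.iterate_add_apply, show k + Tri k = Tri k + k from by omega]
    exact H.I_sub_unit _ (hx (Tri k + k))
  have hp : H.p ∈ Icc (0:ℝ) 1 := H.hI H.hp
  have hb1 : |f^[k] z - H.p| ≤ 1 := by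
    rw [abs_le]
    constructor <;> [linarith [hk.1, hp.2]; linarith [hk.2, hp.1]]
  have : H.lam ^ k * |z - H.p| ≤ 1 := le_trans hest hb1
  rw [le_div_iff₀ hpow]
  linarith [this]

/-- Li–Yorke chaos from a horseshoe. -/
lemma liYorke (H : Horseshoe f) : LiYorkeChaotic f := by
  classical
  -- choose a point for each boolean sequence
  have hexists : ∀ β : ℕ → Bool, ∃ x, ∀ j, f^[j] x ∈ H.I (itin β j) :=
    fun β => H.follow (itin β) (itin_adm β)
  choose xf hxf using hexists
  refine ⟨Set.range xf, ?_, ?_, ?_⟩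
  · rintro y ⟨β, rfl⟩
    have := hxf β 0
    simpa using H.I_sub_unit _ this
  · -- uncountability
    intro hcnt
    have hinj : Function.Injective xf := by
      intro β β' hxx
      by_contra hne
      have hdiff : ∃ i, β i ≠ β' i := by
        by_contra hall
        push_neg at hall
        exact hne (funext hall)
      obtain ⟨i, hi⟩ := hdiff
      set k := Nat.pair i 0 with hk
      have he : (Nat.unpair k).1 = i := by rw [hk, Nat.unpair_pair]
      have h1 := hxf β (Tri k + k)
      have h2 := hxf β' (Tri k + k)
      rw [itin_bit, he] at h1
      rw [hxx] at h1
      rw [itin_bit, he] at h2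
      cases hb : β i <;> cases hb' : β' i <;> rw [hb] at h1 <;> rw [hb'] at h2
      · exact hi (hb.trans hb'.symm)
      · exact H.I_disj h1 h2
      · exact H.I_disj h2 h1
      · exact hi (hb.trans hb'.symm)
    have hsc : Countable ↥(Set.range xf) := hcnt.to_subtype
    have : Countable (ℕ → Bool) :=
      Function.Injective.countable
        (f := fun β : ℕ → Bool => (⟨xf β, Set.mem_range_self β⟩ : ↥(Set.range xf)))
        (fun β β' h => hinj (congrArg Subtype.val h))
    obtain ⟨e, he⟩ := exists_surjective_nat (ℕ → Bool)
    obtain ⟨n, hn⟩ := he (fun n => !(e n n))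
    have := congrFun hn n
    simp at this
  · -- scrambled pairs
    rintro x ⟨β, rfl⟩ y ⟨β', rfl⟩ hne
    have hβne : β ≠ β' := fun h => hne (congrArg xf h)
    set u : ℕ → ℝ := fun n => |f^[n] (xf β) - f^[n] (xf β')| with hu
    have humem : ∀ n, f^[n] (xf β) ∈ Icc (0:ℝ) 1 ∧ f^[n] (xf β') ∈ Icc (0:ℝ) 1 :=
      fun n => ⟨H.I_sub_unit _ (hxf β n), H.I_sub_unit _ (hxf β' n)⟩
    have hu0 : ∀ n, 0 ≤ u n := fun n => abs_nonneg _
    have hu1 : ∀ n, u n ≤ 1 := by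
      intro n
      obtain ⟨h1, h2⟩ := humem n
      rw [hu, abs_le]
      constructor <;> [linarith [h1.1, h2.2]; linarith [h1.2, h2.1]]
    have hbdd_ge : IsBoundedUnder (· ≥ ·) atTop u := Filter.isBoundedUnder_of ⟨0, hu0⟩
    have hbdd_le : IsBoundedUnder (· ≤ ·) atTop u := Filter.isBoundedUnder_of ⟨1, hu1⟩
    have hlam1 : (1:ℝ) < H.lam := H.hlam
    have hlam0 : (0:ℝ) < H.lam := lt_trans zero_lt_one hlam1
    constructor
    · -- liminf = 0
      have hle : ∀ ε : ℝ, 0 < ε → liminf u atTop ≤ ε := by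
        intro ε hε
        refine Filter.liminf_le_of_frequently_le ?_ hbdd_ge
        rw [Filter.frequently_atTop]
        intro N₀
        -- pick k ≥ N₀ with 2 / lam ^ k ≤ ε
        have htend := tendsto_pow_atTop_atTop_of_one_lt hlam1
        obtain ⟨k₀, hk₀⟩ := (htend.eventually_ge_atTop (2 / ε)).exists_forall_of_atTop
        set k := max k₀ N₀ with hkdef
        refine ⟨Tri k, le_trans (le_max_right k₀ N₀) (by exact_mod_cast Tri_ge k), ?_⟩
        have hc1 := H.close_at β (xf β) (hxf β) k
        have hc2 := H.close_at β' (xf β') (hxf β') k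
        have hpow : (0:ℝ) < H.lam ^ k := pow_pos hlam0 k
        have hlk : 2 / ε ≤ H.lam ^ k := hk₀ k (le_max_left k₀ N₀)
        have h2ε : 2 / H.lam ^ k ≤ ε := by
          rw [div_le_iff₀ hpow]
          calc (2:ℝ) = (2/ε) * ε := by field_simp
          _ ≤ H.lam ^ k * ε := by exact mul_le_mul_of_nonneg_right hlk (le_of_lt hε)
          _ = ε * H.lam ^ k := by ring
        calc u (Tri k) ≤ |f^[Tri k] (xf β) - H.p| + |f^[Tri k] (xf β') - H.p| := by
              rw [hu]
              have := abs_sub_le (f^[Tri k] (xf β)) H.p (f^[Tri k] (xf β'))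
              calc |f^[Tri k] (xf β) - f^[Tri k] (xf β')|
                  ≤ |f^[Tri k] (xf β) - H.p| + |H.p - f^[Tri k] (xf β')| := this
                _ = |f^[Tri k] (xf β) - H.p| + |f^[Tri k] (xf β') - H.p| := by
                    rw [abs_sub_comm H.p]
        _ ≤ 1 / H.lam ^ k + 1 / H.lam ^ k := add_le_add hc1 hc2
        _ = 2 / H.lam ^ k := by ring
        _ ≤ ε := h2ε
      have hge : (0:ℝ) ≤ liminf u atTop :=
        Filter.le_liminf_of_le (hbdd_le.isCoboundedUnder_ge)
          (Filter.Eventually.of_forall hu0)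
      have hle0 : liminf u atTop ≤ 0 := by
        by_contra hpos
        push_neg at hpos
        have := hle (liminf u atTop / 2) (by linarith)
        linarith
      linarith
    · -- limsup ≥ gap > 0
      have hfreq : ∃ᶠ n in atTop, H.gap ≤ u n := by
        rw [Filter.frequently_atTop]
        intro N₀
        obtain ⟨i, hi⟩ : ∃ i, β i ≠ β' i := by
          by_contra hall
          push_neg at hall
          exact hβne (funext hall)
        set k := Nat.pair i N₀ with hk
        have he : (Nat.unpair k).1 = i := by rw [hk, Nat.unpair_pair]
        have hkN : N₀ ≤ k := Nat.right_le_pair i N₀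
        refine ⟨Tri k + k, le_trans hkN (by linarith [Tri_ge k, Nat.le_add_left k (Tri k)]), ?_⟩
        have h1 := hxf β (Tri k + k)
        have h2 := hxf β' (Tri k + k)
        rw [itin_bit, he] at h1 h2
        show H.gap ≤ |f^[Tri k + k] (xf β) - f^[Tri k + k] (xf β')|
        cases hb : β i <;> cases hb' : β' i <;> rw [hb] at h1 <;> rw [hb'] at h2
        · exact absurd (hb.trans hb'.symm) hi
        · rw [H.I_false] at h1; rw [H.I_true] at h2
          exact H.hsep _ h1 _ h2
        · rw [H.I_true] at h1; rw [H.I_false] at h2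
          rw [abs_sub_comm]
          exact H.hsep _ h2 _ h1
        · exact absurd (hb.trans hb'.symm) hi
      have := Filter.le_limsup_of_frequently_le hfreq hbdd_le
      linarith [H.hgap]

end Horseshoe

/-- Reflection `x ↦ 1 - x` of a horseshoe. -/
noncomputable def Horseshoe.reflect {f : ℝ → ℝ} (H : Horseshoe f) :
    Horseshoe (fun x => 1 - f (1 - x)) := by
  have key : ∀ S : Set ℝ,
      (fun x => 1 - f (1 - x)) '' ((fun t : ℝ => 1 - t) '' S) = (fun t : ℝ => 1 - t) '' (f '' S) := by
    intro S
    rw [Set.image_image, Set.image_image]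
    apply Set.image_congr'
    intro t
    simp
  have hIcc : ∀ u v : ℝ, (fun t : ℝ => 1 - t) '' Icc u v = Icc (1-v) (1-u) := by
    intro u v
    exact Set.image_const_sub_Icc 1 u v
  have ha0 : (0:ℝ) ≤ H.a ∧ H.b ≤ 1 :=
    ⟨(H.hI ⟨le_refl _, H.hab⟩).1, (H.hI ⟨H.hab, le_refl _⟩).2⟩
  have hc0 : (0:ℝ) ≤ H.c ∧ H.d ≤ 1 :=
    ⟨(H.hJ ⟨le_refl _, H.hcd⟩).1, (H.hJ ⟨H.hcd, le_refl _⟩).2⟩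
  refine
    { a := 1 - H.b, b := 1 - H.a, c := 1 - H.d, d := 1 - H.c, p := 1 - H.p,
      lam := H.lam, gap := H.gap
      hf := continuous_const.sub (H.hf.comp (continuous_const.sub continuous_id))
      hab := by linarith [H.hab]
      hcd := by linarith [H.hcd]
      hI := ?_
      hJ := ?_
      hp := ⟨by linarith [H.hp.2], by linarith [H.hp.1]⟩
      hgap := H.hgap
      hsep := ?_
      hfp := ?_
      hlam := H.hlam
      hexp := ?_
      hcov00 := ?_
      hcov01 := ?_
      hcov10 := ?_ }
  · intro x hx
    simp only [mem_Icc] at hx ⊢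
    exact ⟨by linarith [ha0.2, hx.1], by linarith [ha0.1, hx.2]⟩
  · intro x hx
    simp only [mem_Icc] at hx ⊢
    exact ⟨by linarith [hc0.2, hx.1], by linarith [hc0.1, hx.2]⟩
  · intro x hx y hy
    simp only [mem_Icc] at hx hy
    have h1 : (1 - x : ℝ) ∈ Icc H.a H.b := ⟨by linarith [hx.2], by linarith [hx.1]⟩
    have h2 : (1 - y : ℝ) ∈ Icc H.c H.d := ⟨by linarith [hy.2], by linarith [hy.1]⟩
    have := H.hsep (1-x) h1 (1-y) h2
    rwa [show (1-x) - (1-y) = -(x - y) by ring, abs_neg] at this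
  · show 1 - f (1 - (1 - H.p)) = 1 - H.p
    rw [show (1:ℝ) - (1 - H.p) = H.p by ring, H.hfp]
  · intro x hx
    simp only [mem_Icc] at hx
    show H.lam * |x - (1 - H.p)| ≤ |(1 - f (1 - x)) - (1 - H.p)|
    rw [show (1 - f (1-x)) - (1 - H.p) = -(f (1-x) - H.p) by ring, abs_neg,
      show x - (1 - H.p) = -((1-x) - H.p) by ring, abs_neg]
    exact H.hexp (1-x) ⟨by linarith [hx.2], by linarith [hx.1]⟩
  · have e := hIcc H.a H.b
    rw [← e, key]
    exact Set.image_mono H.hcov00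
  · have e1 := hIcc H.a H.b
    have e2 := hIcc H.c H.d
    rw [← e1, ← e2, key]
    exact Set.image_mono H.hcov01
  · have e1 := hIcc H.a H.b
    have e2 := hIcc H.c H.d
    rw [← e1, ← e2, key]
    exact Set.image_mono H.hcov10

/-- Combined conclusion of a horseshoe. -/
theorem Horseshoe.conclusion {f : ℝ → ℝ} (H : Horseshoe f) :
    (∀ n : ℕ, 1 ≤ n → ∃ x ∈ Icc (0:ℝ) 1, f^[n] x = x ∧
      ∀ k : ℕ, 1 ≤ k → k < n → f^[k] x ≠ x) ∧ LiYorkeChaotic f := by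
  constructor
  · intro n hn
    rcases eq_or_lt_of_le hn with h1 | h2
    · refine ⟨H.p, H.hI H.hp, ?_, ?_⟩
      · rw [← h1]
        simpa using H.hfp
      · intro k hk1 hk2
        omega
    · exact H.periodic_point n h2
  · exact H.liYorke

/-- the concrete family of maps -/
def gmap (q δ : ℝ) : ℝ → ℝ := fun x => x * (1 - δ * (1 - x) * (x - q))

lemma gmap_apply (q δ x : ℝ) : gmap q δ x = x * (1 - δ * (1 - x) * (x - q)) := rfl

lemma gmap_cont (q δ : ℝ) : Continuous (gmap q δ) := by
  unfold gmap; continuity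

set_option maxHeartbeats 1000000 in
/-- Construction of the horseshoe for the concrete map, case `q ≤ 1/2`. -/
noncomputable def buildHS {q δ : ℝ} (hq1 : 4441/10000 < q) (hq2 : q ≤ 1/2)
    (hδl : 199/50 < δ * (1-q)^2) (hδu : δ * (1-q)^2 < 4) :
    Horseshoe (gmap q δ) := by
  have ht : (0:ℝ) ≤ q - 4441/10000 := by linarith
  have hu : (0:ℝ) ≤ 1/2 - q := by linarith
  have hs2 : (0:ℝ) < (1-q)^2 := by nlinarith
  have hδ0 : (0:ℝ) < δ := by nlinarith
  have hδl' : (0:ℝ) ≤ δ * (1-q)^2 - 199/50 := by linarith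
  have hδu' : (0:ℝ) ≤ 4 - δ * (1-q)^2 := by linarith
  -- V1 : B ≤ g A
  have hVa : 4/5*q + 33/100 ≤ gmap q δ (q - 4/25) := by
    rw [gmap_apply]
    have hT : (0:ℝ) ≤ (q - 4/25) * (1 - (q - 4/25)) := by nlinarith
    have hP : (4/5*q + 33/100 - (q - 4/25)) * (1-q)^2
        ≤ (199/50) * ((q - 4/25) * (1 - (q - 4/25))) * (4/25) := by
      nlinarith [mul_nonneg ht hu, mul_nonneg (mul_nonneg ht ht) hu,
        mul_nonneg (mul_nonneg ht hu) hu, mul_nonneg (mul_nonneg ht ht) ht,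
        mul_nonneg (mul_nonneg hu hu) hu]
    have hkey : (4/5*q + 33/100 - (q - 4/25)) * (1-q)^2
        ≤ (δ * ((q - 4/25) * (1 - (q - 4/25))) * (4/25)) * (1-q)^2 := by
      nlinarith [mul_nonneg hδl' hT]
    have h2 := le_of_mul_le_mul_right hkey hs2
    nlinarith [h2]
  -- V2 : g B ≤ 1/25
  have hVb : gmap q δ (4/5*q + 33/100) ≤ 1/25 := by
    rw [gmap_apply]
    have hT : (0:ℝ) ≤ (4/5*q + 33/100) * (1 - (4/5*q + 33/100)) * ((4/5*q + 33/100) - q) := by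
      nlinarith
    have hP : ((4/5*q + 33/100) - 1/25) * (1-q)^2
        ≤ (199/50) * ((4/5*q + 33/100) * (1 - (4/5*q + 33/100)) * ((4/5*q + 33/100) - q)) := by
      nlinarith [mul_nonneg ht hu, mul_nonneg (mul_nonneg ht ht) hu,
        mul_nonneg (mul_nonneg ht hu) hu, mul_nonneg (mul_nonneg ht ht) ht,
        mul_nonneg (mul_nonneg hu hu) hu]
    have hkey : ((4/5*q + 33/100) - 1/25) * (1-q)^2
        ≤ (δ * ((4/5*q + 33/100) * (1 - (4/5*q + 33/100)) * ((4/5*q + 33/100) - q))) * (1-q)^2 := by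
      nlinarith [mul_nonneg hδl' hT]
    have h2 := le_of_mul_le_mul_right hkey hs2
    nlinarith [h2]
  -- V3 : g (1/25) ≤ A
  have hVc : gmap q δ (1/25) ≤ q - 4/25 := by
    rw [gmap_apply]
    have hT : (0:ℝ) ≤ (1/25) * (1 - 1/25) * (q - 1/25) := by nlinarith
    have hP : 4 * ((1/25) * (1 - 1/25) * (q - 1/25)) ≤ ((q - 4/25) - 1/25) * (1-q)^2 := by
      nlinarith [mul_nonneg ht hu, mul_nonneg (mul_nonneg ht ht) hu,
        mul_nonneg (mul_nonneg ht hu) hu, mul_nonneg (mul_nonneg ht ht) ht,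
        mul_nonneg (mul_nonneg hu hu) hu]
    have hkey : (δ * ((1/25) * (1 - 1/25) * (q - 1/25))) * (1-q)^2
        ≤ ((q - 4/25) - 1/25) * (1-q)^2 := by
      nlinarith [mul_nonneg hδu' hT]
    have h2 := le_of_mul_le_mul_right hkey hs2
    nlinarith [h2]
  -- V4 : B ≤ g (1/5)
  have hVd : 4/5*q + 33/100 ≤ gmap q δ (1/5) := by
    rw [gmap_apply]
    have hT : (0:ℝ) ≤ (1/5) * (1 - 1/5) * (q - 1/5) := by nlinarith
    have hP : ((4/5*q + 33/100) - 1/5) * (1-q)^2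
        ≤ (199/50) * ((1/5) * (1 - 1/5) * (q - 1/5)) := by
      nlinarith [mul_nonneg ht hu, mul_nonneg (mul_nonneg ht ht) hu,
        mul_nonneg (mul_nonneg ht hu) hu, mul_nonneg (mul_nonneg ht ht) ht,
        mul_nonneg (mul_nonneg hu hu) hu]
    have hkey : ((4/5*q + 33/100) - 1/5) * (1-q)^2
        ≤ (δ * ((1/5) * (1 - 1/5) * (q - 1/5))) * (1-q)^2 := by
      nlinarith [mul_nonneg hδl' hT]
    have h2 := le_of_mul_le_mul_right hkey hs2
    nlinarith [h2]
  have hAB : (q - 4/25 : ℝ) ≤ 4/5*q + 33/100 := by linarith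
  have hCD : (1/25 : ℝ) ≤ 1/5 := by norm_num
  have hfBfA : gmap q δ (4/5*q + 33/100) ≤ gmap q δ (q - 4/25) := by linarith
  have hfCfD : gmap q δ (1/25) ≤ gmap q δ (1/5) := by linarith
  have hmain : Icc (gmap q δ (4/5*q + 33/100)) (gmap q δ (q - 4/25))
      ⊆ gmap q δ '' Icc (q - 4/25) (4/5*q + 33/100) := by
    have h1 := intermediate_value_uIcc (f := gmap q δ)
      (a := (q - 4/25 : ℝ)) (b := (4/5*q + 33/100 : ℝ)) (gmap_cont q δ).continuousOn
    rwa [Set.uIcc_of_le hAB, Set.uIcc_of_ge hfBfA] at h1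
  have hmain2 : Icc (gmap q δ (1/25)) (gmap q δ (1/5))
      ⊆ gmap q δ '' Icc (1/25) (1/5) := by
    have h1 := intermediate_value_uIcc (f := gmap q δ)
      (a := (1/25 : ℝ)) (b := (1/5 : ℝ)) (gmap_cont q δ).continuousOn
    rwa [Set.uIcc_of_le hCD, Set.uIcc_of_le hfCfD] at h1
  refine
    { a := q - 4/25, b := 4/5*q + 33/100, c := 1/25, d := 1/5, p := q,
      lam := 11/10, gap := q - 9/25
      hf := gmap_cont q δ
      hab := hAB
      hcd := hCD
      hI := ?_
      hJ := ?_
      hp := by constructor <;> [linarith; linarith]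
      hgap := by linarith
      hsep := ?_
      hfp := by rw [gmap_apply]; ring
      hlam := by norm_num
      hexp := ?_
      hcov00 := ?_
      hcov01 := ?_
      hcov10 := ?_ }
  · intro x hx
    simp only [mem_Icc] at hx ⊢
    constructor <;> [linarith [hx.1]; linarith [hx.2]]
  · intro x hx
    simp only [mem_Icc] at hx ⊢
    constructor <;> [linarith [hx.1]; linarith [hx.2]]
  · intro x hx y hy
    simp only [mem_Icc] at hx hy
    calc q - 9/25 ≤ x - y := by linarith [hx.1, hy.2]
    _ ≤ |x - y| := le_abs_self _
  · intro x hx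
    simp only [mem_Icc] at hx
    have hprod : (0:ℝ) ≤ (x - (q - 4/25)) * ((4/5*q + 33/100) - x) :=
      mul_nonneg (by linarith [hx.1]) (by linarith [hx.2])
    have hxx : (0:ℝ) ≤ x * (1 - x) := by nlinarith [hx.1, hx.2]
    have hpoly : (21/10) * (1-q)^2 ≤ (199/50) * (x * (1 - x)) := by
      nlinarith [hprod, mul_nonneg ht hu, mul_nonneg (mul_nonneg ht ht) hu,
        mul_nonneg (mul_nonneg ht hu) hu]
    have hxe : (21/10 : ℝ) ≤ δ * (x * (1 - x)) := by
      have hkey : (21/10) * (1-q)^2 ≤ (δ * (x * (1 - x))) * (1-q)^2 := by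
        nlinarith [mul_nonneg hδl' hxx]
      have h2 := le_of_mul_le_mul_right hkey hs2
      linarith
    have hfactor : gmap q δ x - q = (x - q) * (1 - δ * (x * (1 - x))) := by
      rw [gmap_apply]; ring
    rw [hfactor, abs_mul]
    have habs : |1 - δ * (x * (1 - x))| = δ * (x * (1 - x)) - 1 := by
      rw [abs_of_nonpos (by linarith)]; ring
    rw [habs]
    nlinarith [abs_nonneg (x - q)]
  · refine fun y hy => hmain ?_
    simp only [mem_Icc] at hy ⊢
    exact ⟨by linarith [hy.1], by linarith [hy.2]⟩
  · refine fun y hy => hmain ?_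
    simp only [mem_Icc] at hy ⊢
    exact ⟨by linarith [hy.1], by linarith [hy.2]⟩
  · refine fun y hy => hmain2 ?_
    simp only [mem_Icc] at hy ⊢
    exact ⟨by linarith [hy.1], by linarith [hy.2]⟩

/-- Fix `q ∈ ((31 − 12√3)/23, (12√3 − 8)/23)` and let `δ* = min {4/q², 4/(1−q)²}`,
`g_δ x = x * (1 − δ*(1−x)*(x−q))`.  Then there exists `δ_q ∈ (0, δ*)` such that
for every `δ ∈ (δ_q, δ*)`:
(i) for every `n ≥ 1` the map `g_δ` has a periodic point of least period `n`;
(ii) `g_δ` is Li–Yorke chaotic. -/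
theorem ppi_all_periods_and_LiYorke_chaos (q : ℝ)
    (hq : q ∈ Set.Ioo ((31 - 12 * Real.sqrt 3) / 23) ((12 * Real.sqrt 3 - 8) / 23))
    (g : ℝ → ℝ → ℝ)
    (hg : ∀ δ x : ℝ, g δ x = x * (1 - δ * (1 - x) * (x - q))) :
    ∃ δq ∈ Set.Ioo (0:ℝ) (min (4 / q ^ 2) (4 / (1 - q) ^ 2)),
      ∀ δ ∈ Set.Ioo δq (min (4 / q ^ 2) (4 / (1 - q) ^ 2)),
        (∀ n : ℕ, 1 ≤ n → ∃ x ∈ Set.Icc (0:ℝ) 1,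
          (g δ)^[n] x = x ∧ ∀ k : ℕ, 1 ≤ k → k < n → (g δ)^[k] x ≠ x) ∧
        LiYorkeChaotic (g δ) := by
  obtain ⟨hql, hqu⟩ := hq
  have h3 : Real.sqrt 3 ^ 2 = 3 := Real.sq_sqrt (by norm_num)
  have hs3nn : (0:ℝ) ≤ Real.sqrt 3 := Real.sqrt_nonneg 3
  have hub : Real.sqrt 3 < 17320509/10000000 := by nlinarith
  have hq1 : 4441/10000 < q := by
    have : (4441:ℝ)/10000 < (31 - 12 * Real.sqrt 3) / 23 := by nlinarith
    linarith
  have hq2 : q < 5559/10000 := by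
    have : (12 * Real.sqrt 3 - 8) / 23 < (5559:ℝ)/10000 := by nlinarith
    linarith
  have hq0 : (0:ℝ) < q := by linarith
  have hq1' : q < 1 := by linarith
  have hqsq : (0:ℝ) < q^2 := by positivity
  have hssq : (0:ℝ) < (1-q)^2 := by nlinarith
  have hstar_pos : (0:ℝ) < min (4 / q ^ 2) (4 / (1 - q) ^ 2) := by
    apply lt_min <;> positivity
  refine ⟨(199/200) * min (4 / q ^ 2) (4 / (1 - q) ^ 2), ⟨by positivity, by linarith⟩, ?_⟩
  intro δ hδ
  obtain ⟨hδ1, hδ2⟩ := hδ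
  rcases le_or_gt q (1/2) with hc | hc
  · -- q ≤ 1/2 : direct horseshoe
    have hmin : min (4 / q ^ 2) (4 / (1 - q) ^ 2) = 4 / (1-q)^2 := by
      apply min_eq_right
      rw [div_le_div_iff₀ hssq hqsq]
      nlinarith
    rw [hmin] at hδ1 hδ2
    have hδu : δ * (1-q)^2 < 4 := (lt_div_iff₀ hssq).1 hδ2
    have hδl : 199/50 < δ * (1-q)^2 := by
      have h0 : (199:ℝ)/200 * (4 / (1-q)^2) = (199/50) / (1-q)^2 := by ring
      rw [h0] at hδ1
      exact (div_lt_iff₀ hssq).1 hδ1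
    have H := buildHS hq1 hc hδl hδu
    have hgg : g δ = gmap q δ := funext fun x => by rw [hg, gmap_apply]
    rw [hgg]
    exact H.conclusion
  · -- q > 1/2 : reflected horseshoe built from parameter 1 - q
    have hq1r : 4441/10000 < 1 - q := by linarith
    have hq2r : 1 - q ≤ 1/2 := by linarith
    have hmin : min (4 / q ^ 2) (4 / (1 - q) ^ 2) = 4 / q^2 := by
      apply min_eq_left
      rw [div_le_div_iff₀ hqsq hssq]
      nlinarith
    rw [hmin] at hδ1 hδ2
    have hrewr : (1 - (1 - q))^2 = q^2 := by ring
    have hδu : δ * (1 - (1 - q))^2 < 4 := by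
      rw [hrewr]
      exact (lt_div_iff₀ hqsq).1 hδ2
    have hδl : 199/50 < δ * (1 - (1 - q))^2 := by
      rw [hrewr]
      have h0 : (199:ℝ)/200 * (4 / q^2) = (199/50) / q^2 := by ring
      rw [h0] at hδ1
      exact (div_lt_iff₀ hqsq).1 hδ1
    have H := (buildHS hq1r hq2r hδl hδu).reflect
    have hgg : g δ = fun x => 1 - gmap (1-q) δ (1-x) := by
      funext x
      rw [hg, gmap_apply]
      ring
    rw [hgg]
    exact H.conclusion
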